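/- Let h and g be right-ideal morphisms of A* such that h∘g∘h ≡_bd h. Then h∘g∘h ⊆ h (as partial functions), and (h∘g∘h) ∘ g ∘ (h∘g∘h) = h∘g∘h; in particular h∘g∘h is a regular element with inverse g. -/

import Mathlib

open List

/-- Finite words over the alphabet A = {0,1}. -/
abbrev W := List Bool

/-- Prefix-comparability of words. -/
def pc (x y : W) : Prop := x <+: y ∨ y <+: x

/-- `RI L` is the right ideal `L·A*` generated by `L`. -/
def RI (L : Set W) : Set W := {y | ∃ x ∈ L, ∃ w : W, y = x ++ w}

/-- `R` is a right ideal of `A*`. -/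
def isRightIdeal (R : Set W) : Prop := ∀ x ∈ R, ∀ w : W, x ++ w ∈ R

/-- End-equivalence of sets: `L₁A*` and `L₂A*` intersect the same right ideals. -/
def endEquiv (L₁ L₂ : Set W) : Prop :=
  ∀ R : Set W, isRightIdeal R → ((R ∩ RI L₁).Nonempty ↔ (R ∩ RI L₂).Nonempty)

/-- A prefix code: no two distinct elements are prefix-comparable. -/
def isPrefixCode (P : Set W) : Prop := ∀ x ∈ P, ∀ y ∈ P, x <+: y → x = y

/-- Right-ideal morphism, as a partial function `A* → A*` (using `Option`):
    whenever `f x = some y`, also `f (x++w) = some (y++w)`.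
    (This forces the domain to be a right ideal.) -/
def isRIM (f : W → Option W) : Prop :=
  ∀ x y : W, f x = some y → ∀ w : W, f (x ++ w) = some (y ++ w)

/-- Domain of a partial function. -/
def Dom (f : W → Option W) : Set W := {x | f x ≠ none}

/-- Image of a partial function. -/
def Im (f : W → Option W) : Set W := {y | ∃ x, f x = some y}

/-- The prefix code of minimal elements generating a right ideal `S`. -/
def prefC (S : Set W) : Set W := {x | x ∈ S ∧ ∀ p : W, p <+: x → p ≠ x → p ∉ S}

/-- Domain code of a right-ideal morphism. -/
def domC (f : W → Option W) : Set W := prefC (Dom f)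

/-- Image code of a right-ideal morphism. -/
def imC (f : W → Option W) : Set W := prefC (Im f)

/-- Image of a set under a partial function. -/
def fImage (f : W → Option W) (L : Set W) : Set W := {y | ∃ x ∈ L, f x = some y}

/-- Preimage of a set under a partial function. -/
def fPreim (f : W → Option W) (S : Set W) : Set W := {x | ∃ y ∈ S, f x = some y}

/-- End-equivalence of right-ideal morphisms: the domains are end-equivalent,
    and the functions agree on the common domain. -/
def endEquivF (f g : W → Option W) : Prop :=
  endEquiv (Dom f) (Dom g) ∧ ∀ x, x ∈ Dom f → x ∈ Dom g → f x = g x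

/-- Bounded end-equivalence of sets. -/
def bdSets (P Q : Set W) : Prop :=
  endEquiv P Q ∧ ∃ β : ℕ → ℕ, ∀ x₁ ∈ P, ∀ x₂ ∈ Q, pc x₁ x₂ →
    x₁.length ≤ β x₂.length ∧ x₂.length ≤ β x₁.length

/-- Bounded end-equivalence of right-ideal morphisms. -/
def bdEquivF (f g : W → Option W) : Prop :=
  bdSets (domC f) (domC g) ∧ endEquivF f g

/-- Concatenation of a finite word with an infinite word. -/
def wcat (x : W) (w : ℕ → Bool) : ℕ → Bool :=
  fun i => if h : i < x.length then x.get ⟨i, h⟩ else w (i - x.length)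

/-- `ends L = L·A^ω`: the infinite words having a prefix in `L`. -/
def ends (L : Set W) : Set (ℕ → Bool) := {u | ∃ x ∈ L, ∃ w : ℕ → Bool, u = wcat x w}

/-- Composition of partial functions: `pcomp f g = f ∘ g` (apply `g` first). -/
def pcomp (f g : W → Option W) : W → Option W := fun x => (g x).bind f

/-- `sub f g`: the partial function `g` extends the partial function `f`. -/
def sub (f g : W → Option W) : Prop := ∀ x y : W, f x = some y → g x = some y

/-- if hgh ≡_bd h then hgh ⊆ h and hgh is regular with inverse g. -/
theorem regular_of_bdEquiv (h g : W → Option W)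
    (hh : isRIM h) (hg : isRIM g)
    (hyp : bdEquivF (pcomp h (pcomp g h)) h) :
    sub (pcomp h (pcomp g h)) h ∧
    pcomp (pcomp h (pcomp g h)) (pcomp g (pcomp h (pcomp g h))) =
      pcomp h (pcomp g h) := by
  obtain ⟨-, -, hagree⟩ := hyp
  have hsub : sub (pcomp h (pcomp g h)) h := by
    intro x y hxy
    have hd1 : x ∈ Dom (pcomp h (pcomp g h)) := by
      simp [Dom, hxy]
    have hd2 : x ∈ Dom h := by
      simp only [pcomp] at hxy
      intro hx
      rw [hx] at hxy
      simp at hxy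
    have := hagree x hd1 hd2
    rw [← this, hxy]
  refine ⟨hsub, ?_⟩
  funext x
  simp only [pcomp]
  cases hFx : ((h x).bind g).bind h with
  | none => simp
  | some y =>
    have hx : h x = some y := hsub x y (by simpa [pcomp] using hFx)
    rw [hx] at hFx
    have hFx' : (g y).bind h = some y := by simpa using hFx
    cases hy : g y with
    | none => rw [hy] at hFx'; simp at hFx'
    | some z =>
      rw [hy] at hFx'
      have hz : h z = some y := by simpa using hFx'
      simp [hx, hy, hz, pcomp]
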